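/- There exists a sequence (Γ_n) of pairwise disjoint subsets of {(x,y) ∈ ℕ × ℕ : x < y} such that, setting H = {A ⊆ ℕ : (A × A) ∩ Γ_n = ∅ for some n}, the set ℕ is not the union of finitely many elements of H. -/

import Mathlib

/-- Start of the `m`-th block of consecutive integers; block `m` has size `m^(m+1)`. -/
def gstart (m : ℕ) : ℕ := ∑ j ∈ Finset.range m, j ^ (j + 1)

lemma gstart_succ (m : ℕ) : gstart (m + 1) = gstart m + m ^ (m + 1) :=
  Finset.sum_range_succ _ m

lemma gstart_mono : Monotone gstart := fun a b h =>
  Finset.sum_le_sum_of_subset (Finset.range_subset_range.mpr h)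

/-- The family: pairs `x < y` lying in block `m` (for some `m > n`) whose relative
positions agree in all base-`m` digits except possibly digit `n`. -/
def gam (n : ℕ) : Set (ℕ × ℕ) :=
  {p | p.1 < p.2 ∧ ∃ m, n < m ∧ gstart m ≤ p.1 ∧ p.2 < gstart m + m ^ (m + 1) ∧
    (p.1 - gstart m) % m ^ n = (p.2 - gstart m) % m ^ n ∧
    (p.1 - gstart m) / m ^ (n + 1) = (p.2 - gstart m) / m ^ (n + 1)}

lemma gam_disj {n n' : ℕ} (h : n < n') : Disjoint (gam n) (gam n') := by
  rw [Set.disjoint_left]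
  rintro ⟨x, y⟩ ⟨hxy, m, hnm, hx, hy, hmod, hdiv⟩ ⟨-, m', hnm', hx', hy', hmod', hdiv'⟩
  have hm : m = m' := by
    by_contra hne
    rcases Nat.lt_or_ge m m' with h1 | h1
    · have h2 : gstart m + m ^ (m + 1) ≤ gstart m' := by
        rw [← gstart_succ]; exact gstart_mono h1
      exact absurd hx' (not_le.mpr (lt_of_lt_of_le (hxy.trans hy) h2))
    · have h1' : m' < m := lt_of_le_of_ne h1 (Ne.symm hne)
      have h2 : gstart m' + m' ^ (m' + 1) ≤ gstart m := by
        rw [← gstart_succ]; exact gstart_mono h1'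
      exact absurd hx (not_le.mpr (lt_of_lt_of_le (hxy.trans hy') h2))
  subst hm
  set a := x - gstart m with ha
  set b := y - gstart m with hb
  have hd : m ^ (n + 1) ∣ m ^ n' := pow_dvd_pow m h
  have hab1 : a % m ^ (n + 1) = b % m ^ (n + 1) := by
    calc a % m ^ (n + 1) = (a % m ^ n') % m ^ (n + 1) := (Nat.mod_mod_of_dvd a hd).symm
      _ = (b % m ^ n') % m ^ (n + 1) := by rw [hmod']
      _ = b % m ^ (n + 1) := Nat.mod_mod_of_dvd b hd
  have hab : a = b := by
    conv_lhs => rw [← Nat.div_add_mod a (m ^ (n + 1))]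
    conv_rhs => rw [← Nat.div_add_mod b (m ^ (n + 1))]
    rw [hdiv, hab1]
  have hx2 : x = a + gstart m := (Nat.sub_add_cancel hx).symm
  have hy2 : y = b + gstart m := (Nat.sub_add_cancel (le_trans hx hxy.le)).symm
  have : x = y := by rw [hx2, hy2, hab]
  exact absurd hxy (by omega)

lemma aux_lt {e p q r : ℕ} (h1 : e < p) (h2 : q < r) : e + p * q < p * r := by
  have h3 : p * (q + 1) ≤ p * r := Nat.mul_le_mul_left p h2
  have h4 : p * (q + 1) = p * q + p := by ring
  linarith

lemma aux_eq {e e' p q q' : ℕ} (h : e + p * q = e' + p * q') (h1 : e < p) (h2 : e' < p) :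
    e = e' ∧ q = q' := by
  have hqq : q = q' := by
    rcases Nat.lt_trichotomy q q' with hlt | heq | hgt
    · have := aux_lt h1 hlt
      linarith
    · exact heq
    · have := aux_lt h2 hgt
      linarith
  subst hqq
  exact ⟨Nat.add_right_cancel h, rfl⟩

open Classical in
lemma gam_card {A : Set ℕ} {n m : ℕ} (hnm : n < m)
    (hA : (A ×ˢ A) ∩ gam n = ∅) :
    ((Finset.Ico (gstart m) (gstart m + m ^ (m + 1))).filter (· ∈ A)).card ≤ m ^ m := by
  have hm0 : 0 < m := lt_of_le_of_lt (Nat.zero_le n) hnm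
  have hpn : 0 < m ^ n := pow_pos hm0 n
  have key : ∀ P x : ℕ, gstart m ≤ x → x < gstart m + P → x - gstart m < P := by
    intro P x h1 h2; omega
  rw [← Finset.card_range (m ^ m)]
  apply Finset.card_le_card_of_injOn
    (fun x => (x - gstart m) % m ^ n + m ^ n * ((x - gstart m) / m ^ (n + 1)))
  · intro x hx
    simp only [Finset.mem_coe, Finset.mem_filter, Finset.mem_Ico] at hx
    obtain ⟨⟨hx1, hx2⟩, hxA⟩ := hx
    set a := x - gstart m with hadef
    have ha : a < m ^ (m + 1) := key _ x hx1 hx2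
    have h1 : a % m ^ n < m ^ n := Nat.mod_lt _ hpn
    have h2 : a / m ^ (n + 1) < m ^ (m - n) := by
      apply Nat.div_lt_of_lt_mul
      rw [← pow_add]
      have : n + 1 + (m - n) = m + 1 := by omega
      rw [this]; exact ha
    rw [Finset.mem_coe, Finset.mem_range]
    have := aux_lt h1 h2
    rwa [← pow_add, (by omega : n + (m - n) = m)] at this
  · intro x hx y hy hf
    simp only [Finset.coe_filter, Set.mem_setOf_eq, Finset.mem_Ico] at hx hy
    obtain ⟨⟨hx1, hx2⟩, hxA⟩ := hx
    obtain ⟨⟨hy1, hy2⟩, hyA⟩ := hy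
    set a := x - gstart m with hadef
    set b := y - gstart m with hbdef
    have h1 : a % m ^ n < m ^ n := Nat.mod_lt _ hpn
    have h2 : b % m ^ n < m ^ n := Nat.mod_lt _ hpn
    obtain ⟨hmod, hdiv⟩ := aux_eq hf h1 h2
    rw [Set.eq_empty_iff_forall_notMem] at hA
    rcases Nat.lt_trichotomy x y with h | h | h
    · exact absurd (Set.mem_inter (Set.mem_prod.mpr ⟨hxA, hyA⟩)
        (show (x, y) ∈ gam n from ⟨h, m, hnm, hx1, hy2, hmod, hdiv⟩)) (hA (x, y))
    · exact h
    · exact absurd (Set.mem_inter (Set.mem_prod.mpr ⟨hyA, hxA⟩)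
        (show (y, x) ∈ gam n from ⟨h, m, hnm, hy1, hx2, hmod.symm, hdiv.symm⟩)) (hA (y, x))

/-- There exists a sequence `(Γ_n)` of pairwise disjoint subsets of
`{(x,y) ∈ ℕ × ℕ : x < y}` such that, setting
`H = {A ⊆ ℕ : (A × A) ∩ Γ_n = ∅ for some n}`, the set `ℕ` is not the union of
finitely many elements of `H`. -/
theorem exists_gamma_family :
    ∃ Γ : ℕ → Set (ℕ × ℕ),
      (∀ n, ∀ p ∈ Γ n, p.1 < p.2) ∧
      (Pairwise fun n m => Disjoint (Γ n) (Γ m)) ∧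
      ∀ J : Finset (Set ℕ), (∀ A ∈ J, ∃ n, (A ×ˢ A) ∩ Γ n = ∅) →
        (⋃ A ∈ J, A) ≠ Set.univ := by
  classical
  refine ⟨gam, fun n p hp => hp.1, ?_, ?_⟩
  · intro n n' hne
    rcases Nat.lt_or_gt_of_ne hne with h | h
    · exact gam_disj h
    · exact (gam_disj h).symm
  · intro J hJ hU
    choose! nf hnf using hJ
    set m := J.card + J.sup nf + 1 with hm
    have hm0 : 0 < m := by omega
    set D := Finset.Ico (gstart m) (gstart m + m ^ (m + 1)) with hD
    have hcard : D.card = m ^ (m + 1) := by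
      rw [hD, Nat.card_Ico, Nat.add_sub_cancel_left]
    have hsub : D ⊆ J.biUnion (fun A => D.filter (· ∈ A)) := by
      intro x hx
      have hxu : x ∈ (⋃ A ∈ J, A) := hU ▸ Set.mem_univ x
      rw [Set.mem_iUnion₂] at hxu
      obtain ⟨A, hAJ, hxA⟩ := hxu
      exact Finset.mem_biUnion.mpr ⟨A, hAJ, Finset.mem_filter.mpr ⟨hx, hxA⟩⟩
    have hle : D.card ≤ J.card * m ^ m := by
      calc D.card ≤ (J.biUnion (fun A => D.filter (· ∈ A))).card := Finset.card_le_card hsub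
        _ ≤ ∑ A ∈ J, (D.filter (· ∈ A)).card := Finset.card_biUnion_le
        _ ≤ ∑ A ∈ J, m ^ m := by
            apply Finset.sum_le_sum
            intro A hA
            have hlt : nf A < m := by
              have := Finset.le_sup (f := nf) hA
              omega
            exact gam_card hlt (hnf A hA)
        _ = J.card * m ^ m := by rw [Finset.sum_const, smul_eq_mul]
    rw [hcard] at hle
    have h2 : J.card * m ^ m < m * m ^ m :=
      Nat.mul_lt_mul_of_lt_of_le (by omega) (le_refl _) (pow_pos hm0 m)
    rw [pow_succ, Nat.mul_comm] at hle
    exact absurd (lt_of_le_of_lt hle h2) (lt_irrefl _)
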